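/- Let C and D be K-linear abelian categories, F : C → D a K-linear functor, L/K finite Galois with group G, and F_L : C_L → D_L the base-changed functor. Let M ∈ C_L with M ≅ ᵍM for all g ∈ G and End_{C_L}(M) ≅ L, and suppose End_{D_L}(F_L(M)) ≅ L. Then M descends to C if and only if F_L(M) descends to D. -/
import Mathlib


open CategoryTheory

/-- **Descent along a functor.**
Let `F : C → D` be a `K`-linear functor between `K`-linear abelian categories, `L/K` a
finite Galois extension with group `G`, and `F_L : C_L → D_L` the base-changed functor
(formalized as an `L`-linear functor `Φ` between `L`-linear categories carrying strict
semilinear `G`-actions `ρC`, `ρD`, with `Φ` strictly equivariant; `IndC`, `IndD` are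
the induction functors, and Galois descent holds in both categories: descent data are
effective, and conversely objects in the essential image of induction carry descent
data).  Let `M ∈ C_L` with `M ≅ ᵍM` for all `g ∈ G` and `End_{C_L}(M) ≅ L`, and
suppose `End_{D_L}(F_L M) ≅ L`.  Then `M` descends to `C` iff `F_L M` descends to
`D`. -/
theorem descent_along_functor
    (K L : Type*) [Field K] [Field L] [Algebra K L] [IsGalois K L]
    [FiniteDimensional K L]
    (C D : Type*) [Category C] [Category D] [Preadditive C] [Preadditive D]
    [Linear L C] [Linear L D]
    (ρC : (L ≃ₐ[K] L) → C ⥤ C) (ρD : (L ≃ₐ[K] L) → D ⥤ D)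
    (hmulC : ∀ g h : L ≃ₐ[K] L, ρC (g * h) = ρC h ⋙ ρC g)
    (hmulD : ∀ g h : L ≃ₐ[K] L, ρD (g * h) = ρD h ⋙ ρD g)
    (hsemiC : ∀ (g : L ≃ₐ[K] L) (X Y : C) (f : X ⟶ Y) (a : L),
      (ρC g).map (a • f) = g a • (ρC g).map f)
    (hsemiD : ∀ (g : L ≃ₐ[K] L) (X Y : D) (f : X ⟶ Y) (a : L),
      (ρD g).map (a • f) = g a • (ρD g).map f)
    (Φ : C ⥤ D) [Φ.Additive] [Φ.Linear L]
    (hcomm : ∀ g : L ≃ₐ[K] L, ρC g ⋙ Φ = Φ ⋙ ρD g)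
    (C₀ D₀ : Type*) [Category C₀] [Category D₀]
    (IndC : C₀ ⥤ C) (IndD : D₀ ⥤ D)
    (hdescC : ∀ X : C,
      (∃ N : C₀, Nonempty (IndC.obj N ≅ X)) ↔
      ∃ dat : ∀ g : L ≃ₐ[K] L, X ≅ (ρC g).obj X,
        ∀ g h : L ≃ₐ[K] L,
          (dat (g * h)).hom =
            (dat g).hom ≫ (ρC g).map (dat h).hom ≫
              eqToHom (show (ρC g).obj ((ρC h).obj X) = (ρC (g * h)).obj X by
                rw [hmulC g h]; rfl))
    (hdescD : ∀ X : D,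
      (∃ N : D₀, Nonempty (IndD.obj N ≅ X)) ↔
      ∃ dat : ∀ g : L ≃ₐ[K] L, X ≅ (ρD g).obj X,
        ∀ g h : L ≃ₐ[K] L,
          (dat (g * h)).hom =
            (dat g).hom ≫ (ρD g).map (dat h).hom ≫
              eqToHom (show (ρD g).obj ((ρD h).obj X) = (ρD (g * h)).obj X by
                rw [hmulD g h]; rfl))
    (M : C)
    (htwist : ∀ g : L ≃ₐ[K] L, Nonempty (M ≅ (ρC g).obj M))
    (hEndM : Function.Bijective (fun a : L => a • (𝟙 M)))
    (hEndFM : Function.Bijective (fun a : L => a • (𝟙 (Φ.obj M)))) :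
    (∃ N : C₀, Nonempty (IndC.obj N ≅ M)) ↔
      (∃ N : D₀, Nonempty (IndD.obj N ≅ Φ.obj M)) := by
    classical
  have c : ∀ g : L ≃ₐ[K] L, M ≅ (ρC g).obj M := fun g => (htwist g).some
  have eqO : ∀ (g : L ≃ₐ[K] L) (X : C), Φ.obj ((ρC g).obj X) = (ρD g).obj (Φ.obj X) :=
    fun g X => Functor.congr_obj (hcomm g) X
  -- `dh g`, `di g` : the image iso `Φ M ≅ ᵍ(Φ M)` induced by `c g`
  have hdi1 : ∀ g, (Φ.map (c g).hom ≫ eqToHom (eqO g M)) ≫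
      (eqToHom (eqO g M).symm ≫ Φ.map (c g).inv) = 𝟙 (Φ.obj M) := by
    intro g
    simp [← Φ.map_comp]
  have hdi2 : ∀ g, (eqToHom (eqO g M).symm ≫ Φ.map (c g).inv) ≫
      (Φ.map (c g).hom ≫ eqToHom (eqO g M)) = 𝟙 ((ρD g).obj (Φ.obj M)) := by
    intro g
    simp [← Φ.map_comp_assoc]
  -- one-dimensionality of Hom(M, ᵍM)
  have uC : ∀ (g : L ≃ₐ[K] L) (f : M ⟶ (ρC g).obj M), ∃ a : L, f = a • (c g).hom := by
    intro g f
    obtain ⟨a, ha⟩ := hEndM.surjective (f ≫ (c g).inv)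
    refine ⟨a, ?_⟩
    have : (a • 𝟙 M) ≫ (c g).hom = a • (c g).hom := by simp
    rw [← this, show a • 𝟙 M = f ≫ (c g).inv from ha]
    simp
  -- one-dimensionality of Hom(Φ M, ᵍ(Φ M))
  have uD : ∀ (g : L ≃ₐ[K] L) (f : Φ.obj M ⟶ (ρD g).obj (Φ.obj M)),
      ∃ a : L, f = a • (Φ.map (c g).hom ≫ eqToHom (eqO g M)) := by
    intro g f
    obtain ⟨a, ha⟩ := hEndFM.surjective (f ≫ (eqToHom (eqO g M).symm ≫ Φ.map (c g).inv))
    refine ⟨a, ?_⟩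
    have : (a • 𝟙 (Φ.obj M)) ≫ (Φ.map (c g).hom ≫ eqToHom (eqO g M)) =
        a • (Φ.map (c g).hom ≫ eqToHom (eqO g M)) := by simp
    rw [← this, show a • 𝟙 (Φ.obj M) = f ≫ eqToHom (eqO g M).symm ≫ Φ.map (c g).inv from ha,
      Category.assoc, hdi2 g, Category.comp_id]
  have uDinv : ∀ (g : L ≃ₐ[K] L) (f : (ρD g).obj (Φ.obj M) ⟶ Φ.obj M),
      ∃ a : L, f = a • (eqToHom (eqO g M).symm ≫ Φ.map (c g).inv) := by
    intro g f
    obtain ⟨a, ha⟩ := hEndFM.surjective ((Φ.map (c g).hom ≫ eqToHom (eqO g M)) ≫ f)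
    refine ⟨a, ?_⟩
    have h1 : (eqToHom (eqO g M).symm ≫ Φ.map (c g).inv) ≫
        ((Φ.map (c g).hom ≫ eqToHom (eqO g M)) ≫ f) = f := by
      rw [← Category.assoc, hdi2 g, Category.id_comp]
    rw [← h1, ← ha]
    simp [Linear.comp_smul]
  -- injectivity of scalars on Hom(Φ M, ᵍ(Φ M))
  have uDinj : ∀ (g : L ≃ₐ[K] L) (a b : L),
      a • (Φ.map (c g).hom ≫ eqToHom (eqO g M)) =
        b • (Φ.map (c g).hom ≫ eqToHom (eqO g M)) → a = b := by
    intro g a b hab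
    apply hEndFM.injective
    show a • 𝟙 (Φ.obj M) = b • 𝟙 (Φ.obj M)
    have := congrArg (· ≫ (eqToHom (eqO g M).symm ≫ Φ.map (c g).inv)) hab
    simpa [Linear.smul_comp, hdi1 g] using this
  -- the transfer lemma : Φ applied to a C-cocycle composite
  have T : ∀ (g h : L ≃ₐ[K] L) (u : M ⟶ (ρC g).obj M) (f : M ⟶ (ρC h).obj M)
      (e1 : (ρC g).obj ((ρC h).obj M) = (ρC (g * h)).obj M)
      (e2 : (ρD g).obj ((ρD h).obj (Φ.obj M)) = (ρD (g * h)).obj (Φ.obj M)),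
      Φ.map (u ≫ (ρC g).map f ≫ eqToHom e1) ≫ eqToHom (eqO (g * h) M) =
        (Φ.map u ≫ eqToHom (eqO g M)) ≫
          (ρD g).map (Φ.map f ≫ eqToHom (eqO h M)) ≫ eqToHom e2 := by
    intro g h u f e1 e2
    have hc := Functor.congr_hom (hcomm g) f
    simp only [Functor.comp_map] at hc
    rw [Φ.map_comp, Φ.map_comp, hc, eqToHom_map Φ e1, (ρD g).map_comp,
      eqToHom_map (ρD g) (eqO h M)]
    simp
  -- linearity of the transfer map
  have himg : ∀ (g : L ≃ₐ[K] L) (a : L) (f : M ⟶ (ρC g).obj M),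
      Φ.map (a • f) ≫ eqToHom (eqO g M) = a • (Φ.map f ≫ eqToHom (eqO g M)) := by
    intro g a f
    rw [Φ.map_smul, Linear.smul_comp]
  -- injectivity of the transfer map
  have hinj : ∀ (k : L ≃ₐ[K] L) (f f' : M ⟶ (ρC k).obj M),
      Φ.map f ≫ eqToHom (eqO k M) = Φ.map f' ≫ eqToHom (eqO k M) → f = f' := by
    intro k f f' hff
    obtain ⟨a, rfl⟩ := uC k f
    obtain ⟨b, rfl⟩ := uC k f'
    rw [himg, himg] at hff
    rw [uDinj k a b hff]
  rw [hdescC M, hdescD (Φ.obj M)]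
  constructor
  · rintro ⟨dat, hco⟩
    refine ⟨fun g => ⟨Φ.map (dat g).hom ≫ eqToHom (eqO g M),
      eqToHom (eqO g M).symm ≫ Φ.map (dat g).inv, by simp [← Φ.map_comp],
      by simp [← Φ.map_comp_assoc]⟩, ?_⟩
    intro g h
    dsimp only
    rw [hco g h]
    exact T g h (dat g).hom (dat h).hom _ _
  · rintro ⟨dat, hco⟩
    choose μ hμ using fun g => uD g (dat g).hom
    choose ν hν using fun g => uDinv g (dat g).inv
    have hμν : ∀ g, μ g * ν g = 1 := by
      intro g
      apply hEndFM.injective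
      show (μ g * ν g) • 𝟙 (Φ.obj M) = (1 : L) • 𝟙 (Φ.obj M)
      have h0 := (dat g).hom_inv_id
      rw [hμ g, hν g] at h0
      rw [Linear.smul_comp, Linear.comp_smul, smul_smul, hdi1 g] at h0
      rw [one_smul]
      exact h0
    refine ⟨fun g => ⟨μ g • (c g).hom, ν g • (c g).inv, ?_, ?_⟩, ?_⟩
    · have : (μ g • (c g).hom) ≫ (ν g • (c g).inv) = (μ g * ν g) • 𝟙 M := by
        rw [Linear.smul_comp, Linear.comp_smul, smul_smul, (c g).hom_inv_id]
      rw [this, hμν g, one_smul]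
    · have : (ν g • (c g).inv) ≫ (μ g • (c g).hom) = (ν g * μ g) • 𝟙 ((ρC g).obj M) := by
        rw [Linear.smul_comp, Linear.comp_smul, smul_smul, (c g).inv_hom_id]
      rw [this, mul_comm, hμν g, one_smul]
    · intro g h
      dsimp only
      apply hinj (g * h)
      rw [himg, ← hμ (g * h), T g h (μ g • (c g).hom) (μ h • (c h).hom) _ _,
        himg, himg, ← hμ g, ← hμ h]
      exact hco g h
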